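/- Let q ∈ (2,4), α > 0 and λ ∈ ℝ. Let u : [0,∞) → ℝ be continuous with u(x) > 0 for all x ≥ 0, continuously differentiable on (0,∞), with ∫₀^∞ u(x)² g(x) dx < ∞ and ∫₀^∞ u'(x)² g(x) dx < ∞. Assume that x ↦ g(x)u'(x) extends to a continuous function on [0,∞) which is differentiable on (0,1) ∪ (1,∞) with (g(x)u'(x))' = λ g(x) u(x) there, that the right derivative u'(0⁺) exists and satisfies 4 u'(0⁺) = −α u(0)^{q−1}, and that lim_{x→∞} g(x)u(x) = 0 and lim_{x→∞} g(x)u'(x) = 0. Then (α²/16) u(0)^{2q−2} = λ u(0)² + λ ∫₀^∞ u(x)² g(x) dx − 4λ ∫₀¹ u(x)² dx. -/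

import Mathlib

open MeasureTheory Set

/-- The weight `g(x) = 4` for `x ≤ 1` and `g(x) = 4(2x−1)` for `x > 1`. -/
noncomputable def g (x : ℝ) : ℝ := if x ≤ 1 then 4 else 4 * (2 * x - 1)

/-- `u` belongs to the weighted Sobolev space `H¹(ℝ⁺, g dx)` with derivative
`u'`: it is locally absolutely continuous on `[0,∞)` (primitive of `u'`) and
both `u² g` and `u'² g` are integrable on `(0,∞)`. -/
def InH1g (u u' : ℝ → ℝ) : Prop :=
  IntegrableOn (fun x => (u x) ^ 2 * g x) (Ioi 0) ∧
    IntegrableOn (fun x => (u' x) ^ 2 * g x) (Ioi 0) ∧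
    ∀ a b : ℝ, 0 ≤ a → 0 ≤ b → u b - u a = ∫ x in a..b, u' x

/-- The weighted mass `∫₀^∞ u² g dx`. -/
noncomputable def massg (u : ℝ → ℝ) : ℝ := ∫ x in Ioi (0 : ℝ), (u x) ^ 2 * g x

/-- The reduced energy `Ẽ_{q,α}(u) = (1/2)∫₀^∞ u'² g dx − (α/q)|u(0)|^q`. -/
noncomputable def energyg (q α : ℝ) (u u' : ℝ → ℝ) : ℝ :=
  (1 / 2) * (∫ x in Ioi (0 : ℝ), (u' x) ^ 2 * g x) - (α / q) * |u 0| ^ q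

/-- The set of reduced energies over `X_μ = {u : 0 < ∫ u² g ≤ μ}`;
its infimum is `𝓔̃_{q,α}(μ)`. -/
def levelSetg (q α μ : ℝ) : Set ℝ :=
  {E | ∃ u u' : ℝ → ℝ, InH1g u u' ∧ 0 < massg u ∧ massg u ≤ μ ∧
    E = energyg q α u u'}

lemma g_of_le {x : ℝ} (h : x ≤ 1) : g x = 4 := if_pos h

lemma g_of_gt {x : ℝ} (h : 1 < x) : g x = 4 * (2 * x - 1) := if_neg (not_le.2 h)

lemma g_continuous : Continuous g := by
  have : Continuous fun x : ℝ => if x ≤ 1 then (4 : ℝ) else 4 * (2 * x - 1) := by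
    apply Continuous.if_le continuous_const (by continuity) continuous_id continuous_const
    intro x hx
    subst hx; norm_num
  exact this

lemma hasDerivAt_g {x : ℝ} (h : 1 < x) : HasDerivAt g 8 x := by
  have h8 : HasDerivAt (fun x : ℝ => 4 * (2 * x - 1)) 8 x := by
    have := ((hasDerivAt_id x).const_mul (2 : ℝ)).sub_const 1
    have h := this.const_mul (4 : ℝ)
    have e : (8:ℝ) = 4 * (2 * 1) := by norm_num
    rw [e]; exact h
  apply h8.congr_of_eventuallyEq
  filter_upwards [Ioi_mem_nhds h] with y hy
  exact g_of_gt hy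

/-- Pohozaev-type identity for positive solutions of `(g u')' = λ g u` on the
weighted half-line with boundary condition `4u'(0⁺) = −α u(0)^{q−1}` and
vanishing of `g u` and `g u'` at infinity:
`(α²/16)u(0)^{2q−2} = λu(0)² + λ∫₀^∞ u² g − 4λ∫₀¹ u²`. -/
theorem stmt17 (q α lam : ℝ) (hq : 2 < q) (hq' : q < 4) (hα : 0 < α)
    (u : ℝ → ℝ)
    (hcont : ContinuousOn u (Ici 0)) (hpos : ∀ x : ℝ, 0 ≤ x → 0 < u x)
    (hC1 : ContDiffOn ℝ 1 u (Ioi 0))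
    (hint : IntegrableOn (fun x => (u x) ^ 2 * g x) (Ioi 0))
    (hint' : IntegrableOn (fun x => (deriv u x) ^ 2 * g x) (Ioi 0))
    (G : ℝ → ℝ) (hGcont : ContinuousOn G (Ici 0))
    (hGeq : ∀ x ∈ Ioi (0 : ℝ), G x = g x * deriv u x)
    (hode : ∀ x ∈ Ioo (0 : ℝ) 1 ∪ Ioi 1, HasDerivAt G (lam * g x * u x) x)
    (m : ℝ) (hm : HasDerivWithinAt u m (Ici 0) 0)
    (hbc : 4 * m = -α * u 0 ^ (q - 1))
    (hdecay : Filter.Tendsto (fun x => g x * u x) Filter.atTop (nhds 0))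
    (hdecay' : Filter.Tendsto G Filter.atTop (nhds 0)) :
    α ^ 2 / 16 * u 0 ^ (2 * q - 2) =
      lam * (u 0) ^ 2 + lam * (∫ x in Ioi (0 : ℝ), (u x) ^ 2 * g x)
        - 4 * lam * ∫ x in (0 : ℝ)..1, (u x) ^ 2 := by
  have hdiff : DifferentiableOn ℝ u (Ioi 0) := hC1.differentiableOn one_ne_zero
  have hcontg : Continuous g := g_continuous
  -- Step A : G 0 = 4 * m
  have hG0 : G 0 = 4 * m := by
    have hGten : Filter.Tendsto G (nhdsWithin 0 (Ioi 0)) (nhds (G 0)) :=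
      ((hGcont 0 self_mem_Ici).mono Ioi_subset_Ici_self).tendsto
    have hderivlim : Filter.Tendsto (fun x => deriv u x) (nhdsWithin 0 (Ioi 0)) (nhds (G 0 / 4)) := by
      have h1 : Filter.Tendsto (fun x => G x / 4) (nhdsWithin 0 (Ioi 0)) (nhds (G 0 / 4)) :=
        hGten.div_const 4
      apply h1.congr'
      filter_upwards [self_mem_nhdsWithin,
        Ioo_mem_nhdsGT_of_mem (by norm_num : (0:ℝ) ∈ Ico (0:ℝ) 1)] with x hx hx1
      have := hGeq x hx
      rw [this, g_of_le (le_of_lt hx1.2)]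
      ring
    have h2 : HasDerivWithinAt u (G 0 / 4) (Ici 0) 0 :=
      hasDerivWithinAt_Ici_of_tendsto_deriv hdiff
        ((hcont 0 self_mem_Ici).mono Ioi_subset_Ici_self) self_mem_nhdsWithin hderivlim
    have := (uniqueDiffOn_Ici (0:ℝ) 0 self_mem_Ici).eq_deriv _ hm h2
    rw [this]; ring
  -- Step B : constancy of P on [0,1]
  set P : ℝ → ℝ := fun x => G x ^ 2 - 16 * lam * u x ^ 2 with hP
  have hP10 : P 1 = P 0 := by
    have hPcont : ContinuousOn P (Icc 0 1) := by
      apply ContinuousOn.sub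
      · exact ((hGcont.mono (Icc_subset_Ici_self)).pow 2)
      · exact ((hcont.mono (Icc_subset_Ici_self)).pow 2).const_smul (16 * lam) |>.congr
          (fun x _ => by simp [smul_eq_mul])
    have hPderiv : ∀ x ∈ Ioo (0:ℝ) 1, HasDerivAt P 0 x := by
      intro x hx
      have hu : HasDerivAt u (deriv u x) x :=
        (hdiff.differentiableAt (Ioi_mem_nhds hx.1)).hasDerivAt
      have hG : HasDerivAt G (lam * g x * u x) x := hode x (Or.inl hx)
      have h := (hG.pow 2).sub ((hu.pow 2).const_mul (16 * lam))
      have hGx : G x = 4 * deriv u x := by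
        rw [hGeq x hx.1, g_of_le (le_of_lt hx.2)]
      have hgx : g x = 4 := g_of_le (le_of_lt hx.2)
      refine h.congr_deriv ?_
      rw [hGx, hgx]; push_cast; ring
    have := intervalIntegral.integral_eq_sub_of_hasDerivAt_of_le zero_le_one hPcont hPderiv
      (intervalIntegrable_const)
    simp at this
    linarith
  -- Step C : Q 1 = 16 lam I
  set Q : ℝ → ℝ := fun x => G x ^ 2 - lam * (g x * u x) ^ 2 with hQ
  have hIint : IntegrableOn (fun x => (u x) ^ 2 * g x) (Ioi 1) :=
    hint.mono_set (Ioi_subset_Ioi zero_le_one)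
  set I : ℝ := ∫ x in Ioi (1:ℝ), (u x) ^ 2 * g x with hI
  have hQ1 : Q 1 = 16 * lam * I := by
    have key : ∀ T : ℝ, 1 ≤ T → Q T - Q 1 = -(16 * lam) * ∫ x in (1:ℝ)..T, (u x) ^ 2 * g x := by
      intro T hT
      have hQcont : ContinuousOn Q (Icc 1 T) := by
        have hsub : Icc (1:ℝ) T ⊆ Ici 0 := fun x hx => le_trans zero_le_one hx.1
        apply ContinuousOn.sub ((hGcont.mono hsub).pow 2)
        exact ContinuousOn.const_smul (((hcontg.continuousOn.mul (hcont.mono hsub))).pow 2) lam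
          |>.congr (fun x _ => by simp [smul_eq_mul])
      have hQderiv : ∀ x ∈ Ioo (1:ℝ) T, HasDerivAt Q (-(16 * lam) * ((u x) ^ 2 * g x)) x := by
        intro x hx
        have hx0 : (0:ℝ) < x := lt_trans zero_lt_one hx.1
        have hu : HasDerivAt u (deriv u x) x :=
          (hdiff.differentiableAt (Ioi_mem_nhds hx0)).hasDerivAt
        have hg : HasDerivAt g 8 x := hasDerivAt_g hx.1
        have hgu : HasDerivAt (fun x => g x * u x) (8 * u x + g x * deriv u x) x := hg.mul hu
        have hG : HasDerivAt G (lam * g x * u x) x := hode x (Or.inr hx.1)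
        have h := (hG.pow 2).sub ((hgu.pow 2).const_mul lam)
        have hGx : G x = g x * deriv u x := hGeq x hx0
        refine h.congr_deriv ?_
        rw [hGx]; push_cast; ring
      have hii : IntervalIntegrable (fun x => -(16 * lam) * ((u x) ^ 2 * g x)) volume 1 T := by
        apply ContinuousOn.intervalIntegrable
        rw [uIcc_of_le hT]
        have hsub : Icc (1:ℝ) T ⊆ Ici 0 := fun x hx => le_trans zero_le_one hx.1
        exact (((hcont.mono hsub).pow 2).mul hcontg.continuousOn).const_smul (-(16 * lam))
          |>.congr (fun x _ => by simp [smul_eq_mul])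
      have := intervalIntegral.integral_eq_sub_of_hasDerivAt_of_le hT hQcont hQderiv hii
      rw [intervalIntegral.integral_const_mul] at this
      linarith
    have hlim1 : Filter.Tendsto (fun T : ℝ => Q 1 + -(16 * lam) * ∫ x in (1:ℝ)..T, (u x) ^ 2 * g x)
        Filter.atTop (nhds (Q 1 + -(16 * lam) * I)) := by
      exact Filter.Tendsto.const_add _ (Filter.Tendsto.const_mul _
        (intervalIntegral_tendsto_integral_Ioi 1 hIint Filter.tendsto_id))
    have hlim2 : Filter.Tendsto Q Filter.atTop (nhds 0) := by
      have h1 : Filter.Tendsto (fun T => G T ^ 2) Filter.atTop (nhds 0) := by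
        simpa using hdecay'.pow 2
      have h2 : Filter.Tendsto (fun T => lam * (g T * u T) ^ 2) Filter.atTop (nhds 0) := by
        simpa using (hdecay.pow 2).const_mul lam
      simpa using h1.sub h2
    have heq : Filter.Tendsto Q Filter.atTop (nhds (Q 1 + -(16 * lam) * I)) := by
      apply hlim1.congr'
      filter_upwards [Filter.eventually_ge_atTop (1:ℝ)] with T hT
      have := key T hT
      linarith
    have := tendsto_nhds_unique heq hlim2
    linarith
  -- combine
  have hQP : Q 1 = P 1 := by
    simp only [hQ, hP, g_of_le (le_refl (1:ℝ))]
    ring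
  have hmain : G 0 ^ 2 - 16 * lam * u 0 ^ 2 = 16 * lam * I := by
    rw [← hQ1, hQP, hP10]
  -- G 0 ^ 2 = α ^ 2 * u 0 ^ (2q-2)
  have hu0 : (0:ℝ) < u 0 := hpos 0 le_rfl
  have hpow : (u 0 ^ (q - 1)) ^ (2:ℕ) = u 0 ^ (2 * q - 2) := by
    rw [← Real.rpow_natCast (u 0 ^ (q-1)) 2, ← Real.rpow_mul hu0.le]
    congr 1
    push_cast
    ring
  have hG0sq : G 0 ^ 2 = α ^ 2 * u 0 ^ (2 * q - 2) := by
    rw [hG0, hbc, ← hpow]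
    ring
  -- split the integral
  have hsplit : (∫ x in Ioi (0:ℝ), (u x) ^ 2 * g x)
      = (∫ x in Ioc (0:ℝ) 1, (u x) ^ 2 * g x) + I := by
    rw [hI, ← setIntegral_union (Ioc_disjoint_Ioi le_rfl) measurableSet_Ioi
      (hint.mono_set Ioc_subset_Ioi_self) hIint, Ioc_union_Ioi_eq_Ioi zero_le_one]
  have hIoc : (∫ x in Ioc (0:ℝ) 1, (u x) ^ 2 * g x) = 4 * ∫ x in (0:ℝ)..1, (u x) ^ 2 := by
    rw [intervalIntegral.integral_of_le zero_le_one, ← integral_const_mul]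
    apply setIntegral_congr_fun measurableSet_Ioc
    intro x hx
    show u x ^ 2 * g x = 4 * u x ^ 2
    rw [g_of_le hx.2]; ring
  rw [hsplit, hIoc]
  have h16 : α ^ 2 * u 0 ^ (2 * q - 2) - 16 * lam * u 0 ^ 2 = 16 * lam * I := by
    rw [← hG0sq]; exact hmain
  linarith
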